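/- arXiv:0712.0331 — 4 statements merged into one kernel-verified Lean document; each statement's English description precedes it below -/
import Mathlib

section
/- For every integer n ≥ 2 with ω(n) = l, one has β_l ≤ β(n) ≤ α(n) ≤ α_l. -/
open scoped BigOperators

attribute [local instance] Classical.propDecidable

/-- A sequence (multiset) over `G` is zero-sumfree if no nonempty sub-multiset sums to `0`. -/
def IsZeroSumFree {G : Type*} [AddCommGroup G] (S : Multiset G) : Prop :=
  ∀ T : Multiset G, T ≤ S → T ≠ 0 → T.sum ≠ 0

/-- A minimal zero-sum sequence: sum `0`, and no nonempty proper sub-multiset sums to `0`. -/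
def IsMinimalZeroSum {G : Type*} [AddCommGroup G] (S : Multiset G) : Prop :=
  S.sum = 0 ∧ ∀ T : Multiset G, T < S → T ≠ 0 → T.sum ≠ 0

/-- The cross number of a sequence: `k(S) = Σ_{g ∈ S} 1/ord(g)`. -/
noncomputable def crossNumber {G : Type*} [AddCommGroup G] (S : Multiset G) : ℝ :=
  (S.map fun g => (1 : ℝ) / (addOrderOf g)).sum

/-- The little cross number `k(G)`: max of `k(S)` over zero-sumfree sequences `S` over `G`. -/
noncomputable def littleCrossNumber (G : Type*) [AddCommGroup G] : ℝ :=
  sSup {x : ℝ | ∃ S : Multiset G, IsZeroSumFree S ∧ crossNumber S = x}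

/-- The cross number `K(G)`: max of `k(S)` over minimal zero-sum sequences `S` over `G`. -/
noncomputable def bigCrossNumber (G : Type*) [AddCommGroup G] : ℝ :=
  sSup {x : ℝ | ∃ S : Multiset G, IsMinimalZeroSum S ∧ crossNumber S = x}

/-- The Davenport constant `D(G)`. -/
noncomputable def davenport (G : Type*) [AddCommGroup G] : ℕ :=
  sInf {t | 1 ≤ t ∧ ∀ S : Multiset G, t ≤ Multiset.card S →
    ∃ T, T ≤ S ∧ T ≠ 0 ∧ T.sum = 0}

/-- The constant `η(G)`. -/
noncomputable def etaConst (G : Type*) [AddCommGroup G] : ℕ :=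
  sInf {t | 1 ≤ t ∧ ∀ S : Multiset G, t ≤ Multiset.card S →
    ∃ T, T ≤ S ∧ T ≠ 0 ∧ Multiset.card T ≤ AddMonoid.exponent G ∧ T.sum = 0}

/-- `υ_i(d',d) = A_i / gcd(A_i, B_i)` where `A_i = gcd(d', n_i)` and
`B_i = lcm(d, n_i)/lcm(d', n_i)`. -/
def upsilon (ni d' d : ℕ) : ℕ :=
  Nat.gcd d' ni / Nat.gcd (Nat.gcd d' ni) (Nat.lcm d ni / Nat.lcm d' ni)

/-- `k*` of `C_{n_1} ⊕ ... ⊕ C_{n_r}`, computed from the primary decomposition. -/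
noncomputable def kStarTuple {r : ℕ} (n : Fin r → ℕ) : ℝ :=
  ∑ i, ∑ p ∈ (n i).primeFactors,
    ((p ^ ((n i).factorization p) : ℝ) - 1) / (p ^ ((n i).factorization p))

/-- `α(n) = Σ_{d | n} (P⁻(d) − 1)/d`. -/
noncomputable def alphaFn (n : ℕ) : ℝ :=
  ∑ d ∈ n.divisors, ((d.minFac : ℝ) - 1) / d

/-- `β(n) = Σ_{p | n prime} (p − 1)/p`. -/
noncomputable def betaFn (n : ℕ) : ℝ :=
  ∑ p ∈ n.primeFactors, ((p : ℝ) - 1) / p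

/-- `p_l`, the `l`-th prime number (`p_1 = 2`). -/
noncomputable def nthPrime (l : ℕ) : ℕ := Nat.nth Nat.Prime (l - 1)

/-- `α_1 = 1` and `α_l = 1 + (p_l/(p_l − 1))·α_{l−1}` for `l ≥ 2`. -/
noncomputable def alphaSeq : ℕ → ℝ
  | 0 => 0
  | 1 => 1
  | l + 2 => 1 + ((nthPrime (l + 2) : ℝ) / ((nthPrime (l + 2) : ℝ) - 1)) * alphaSeq (l + 1)

/-- `β_l = Σ_{i=1}^l (p_i − 1)/p_i`. -/
noncomputable def betaSeq (l : ℕ) : ℝ :=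
  ∑ i ∈ Finset.range l, ((nthPrime (i + 1) : ℝ) - 1) / (nthPrime (i + 1))

/-- `γ_l = 3α_l − β_l`. -/
noncomputable def gammaSeq (l : ℕ) : ℝ := 3 * alphaSeq l - betaSeq l


/-! ### Auxiliary development -/

section Aux

open Finset

private lemma real_c_anti {x y : ℝ} (hx : 2 ≤ x) (hxy : x ≤ y) :
    y / (y - 1) ≤ x / (x - 1) := by
  have h1 : 0 < x - 1 := by linarith
  have h2 : 0 < y - 1 := by linarith
  rw [div_le_div_iff₀ h2 h1]; nlinarith

private lemma real_beta_mono {x y : ℝ} (hx : 0 < x) (hxy : x ≤ y) :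
    (x - 1) / x ≤ (y - 1) / y := by
  have hy : 0 < y := lt_of_lt_of_le hx hxy
  rw [div_le_div_iff₀ hx hy]; nlinarith

noncomputable def qp (i : ℕ) : ℕ := Nat.nth Nat.Prime i

lemma qp_prime (i : ℕ) : (qp i).Prime := Nat.prime_nth_prime i

lemma qp_two_le (i : ℕ) : 2 ≤ qp i := (qp_prime i).two_le

lemma qp_le_qp {i j : ℕ} (h : i ≤ j) : qp i ≤ qp j :=
  (Nat.nth_le_nth Nat.infinite_setOf_prime).mpr h

lemma qp_count {p : ℕ} (hp : p.Prime) : qp (Nat.count Nat.Prime p) = p := Nat.nth_count hp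

lemma le_count {t p : ℕ} (hp : p.Prime) (h : qp t ≤ p) : t ≤ Nat.count Nat.Prime p := by
  rw [← qp_count hp] at h
  exact (Nat.nth_le_nth Nat.infinite_setOf_prime).mp h

lemma qp_le_of_prime {p : ℕ} (hp : p.Prime) : qp 0 ≤ p := by
  calc qp 0 ≤ qp (Nat.count Nat.Prime p) := qp_le_qp (Nat.zero_le _)
  _ = p := qp_count hp

lemma qp_succ_le {t r : ℕ} (hr : r.Prime) (h : qp t < r) : qp (t + 1) ≤ r := by
  have h1 : qp t < qp (Nat.count Nat.Prime r) := by rw [qp_count hr]; exact h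
  have h2 : t < Nat.count Nat.Prime r := (Nat.nth_lt_nth Nat.infinite_setOf_prime).mp h1
  calc qp (t + 1) ≤ qp (Nat.count Nat.Prime r) := qp_le_qp h2
  _ = r := qp_count hr

noncomputable def cF (i : ℕ) : ℝ := (qp i : ℝ) / ((qp i : ℝ) - 1)

lemma two_le_qpR (i : ℕ) : (2 : ℝ) ≤ (qp i : ℝ) := by exact_mod_cast qp_two_le i

lemma one_le_cF (i : ℕ) : 1 ≤ cF i := by
  have h := two_le_qpR i
  rw [cF, le_div_iff₀ (by linarith)]; linarith

lemma cF_pos (i : ℕ) : 0 < cF i := lt_of_lt_of_le one_pos (one_le_cF i)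

lemma cF_anti {i j : ℕ} (h : i ≤ j) : cF j ≤ cF i :=
  real_c_anti (two_le_qpR i) (by exact_mod_cast qp_le_qp h)

noncomputable def Pp (t l : ℕ) : ℝ := ∏ k ∈ Finset.range l, cF (t + k)

noncomputable def As (t l : ℕ) : ℝ := ∑ i ∈ Finset.range l, Pp (t + i + 1) (l - 1 - i)

lemma Pp_pos (t l : ℕ) : 0 < Pp t l := Finset.prod_pos fun _ _ => cF_pos _

lemma Pp_succ (t l : ℕ) : Pp t (l + 1) = cF t * Pp (t + 1) l := by
  rw [Pp, Finset.prod_range_succ' (fun k => cF (t + k)) l, mul_comm]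
  congr 1
  · rw [Pp]
    apply Finset.prod_congr rfl
    intro k _
    congr 1
    omega

lemma Pp_succ_right (t k : ℕ) : Pp t (k + 1) = Pp t k * cF (t + k) :=
  Finset.prod_range_succ _ _

lemma Pp_anti {t t' : ℕ} (h : t ≤ t') (l : ℕ) : Pp t' l ≤ Pp t l :=
  Finset.prod_le_prod (fun _ _ => (cF_pos _).le) (fun i _ => cF_anti (by omega))

lemma As_nonneg (t l : ℕ) : 0 ≤ As t l :=
  Finset.sum_nonneg fun _ _ => (Pp_pos _ _).le

lemma As_succ (t l : ℕ) : As t (l + 1) = Pp (t + 1) l + As (t + 1) l := by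
  rw [As, Finset.sum_range_succ' (fun i => Pp (t + i + 1) (l + 1 - 1 - i)) l, add_comm]
  congr 1
  rw [As]
  apply Finset.sum_congr rfl
  intro i _
  congr 1 <;> omega

lemma As_anti {t t' : ℕ} (h : t ≤ t') (l : ℕ) : As t' l ≤ As t l :=
  Finset.sum_le_sum fun i _ => Pp_anti (by omega) _

lemma As_back (l : ℕ) : As 0 (l + 1) = As 0 l * cF l + 1 := by
  have h : As 0 (l + 1) = ∑ i ∈ Finset.range (l + 1), Pp (i + 1) (l - i) := by
    rw [As]
    apply Finset.sum_congr rfl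
    intro i _
    congr 1
    omega
  rw [h, Finset.sum_range_succ]
  have h2 : Pp (l + 1) (l - l) = 1 := by rw [Nat.sub_self, Pp]; simp
  rw [h2]
  congr 1
  rw [As, Finset.sum_mul]
  apply Finset.sum_congr rfl
  intro i hi
  rw [Finset.mem_range] at hi
  have h3 : l - i = (l - 1 - i) + 1 := by omega
  rw [h3, Pp_succ_right]
  have h4 : i + 1 + (l - 1 - i) = l := by omega
  rw [h4]
  congr 2
  omega

lemma As_eq_alphaSeq : ∀ l : ℕ, As 0 l = alphaSeq l := by
  intro l
  induction l with
  | zero => simp [As, alphaSeq]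
  | succ k ih =>
    rw [As_back, ih]
    match k with
    | 0 => simp [alphaSeq, As]
    | j + 1 =>
      show alphaSeq (j + 1) * cF (j + 1) + 1 = alphaSeq (j + 2)
      have h21 : j + 2 - 1 = j + 1 := rfl
      have hc : cF (j + 1) = ((nthPrime (j + 2) : ℝ)) / ((nthPrime (j + 2) : ℝ) - 1) := by
        rw [cF, qp, nthPrime, h21]
      rw [alphaSeq, hc]
      ring

noncomputable def SF (n : ℕ) : ℝ := ∑ d ∈ n.divisors, (1 : ℝ) / d

lemma SF_nonneg (n : ℕ) : 0 ≤ SF n :=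
  Finset.sum_nonneg fun d _ => by positivity

lemma key_split (n : ℕ) (hn : 2 ≤ n) (f : ℕ → ℝ) :
    ∑ d ∈ n.divisors, f d =
      ∑ d ∈ (ordCompl[n.minFac] n).divisors, f d +
        ∑ e ∈ (n / n.minFac).divisors, f (n.minFac * e) := by
  have hn0 : n ≠ 0 := by omega
  have hp0 : n.minFac.Prime := Nat.minFac_prime (by omega)
  have hdvd : n.minFac ∣ n := Nat.minFac_dvd n
  have hmul : n.minFac * (n / n.minFac) = n := Nat.mul_div_cancel' hdvd
  have hq : n / n.minFac ≠ 0 := by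
    intro h
    rw [h, mul_zero] at hmul
    exact hn0 hmul.symm
  classical
  rw [← Finset.sum_filter_add_sum_filter_not n.divisors (fun d => n.minFac ∣ d) f, add_comm]
  congr 1
  · have heq : Finset.filter (fun d => ¬ n.minFac ∣ d) n.divisors
        = (ordCompl[n.minFac] n).divisors := by
      ext d
      simp only [Finset.mem_filter, Nat.mem_divisors]
      constructor
      · rintro ⟨⟨hd, _⟩, hnd⟩
        exact ⟨Nat.dvd_ordCompl_of_dvd_not_dvd hd hnd, (Nat.ordCompl_pos n.minFac hn0).ne'⟩
      · rintro ⟨hd, _⟩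
        refine ⟨⟨hd.trans (Nat.ordCompl_dvd n n.minFac), hn0⟩, fun hc => ?_⟩
        exact Nat.not_dvd_ordCompl hp0 hn0 (hc.trans hd)
    rw [heq]
  · have himg : Finset.filter (fun d => n.minFac ∣ d) n.divisors
        = (n / n.minFac).divisors.image (fun e => n.minFac * e) := by
      ext d
      simp only [Finset.mem_filter, Nat.mem_divisors, Finset.mem_image]
      constructor
      · rintro ⟨⟨hd, _⟩, e, rfl⟩
        refine ⟨e, ⟨?_, hq⟩, rfl⟩
        exact (mul_dvd_mul_iff_left hp0.pos.ne').mp (hd.trans (dvd_of_eq hmul.symm))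
      · rintro ⟨e, ⟨he, _⟩, rfl⟩
        exact ⟨⟨(mul_dvd_mul_left n.minFac he).trans (dvd_of_eq hmul), hn0⟩, e, rfl⟩
    rw [himg, Finset.sum_image]
    intro a _ b _ hab
    exact mul_left_cancel₀ hp0.pos.ne' hab

lemma SF_split (n : ℕ) (hn : 2 ≤ n) :
    SF n = SF (ordCompl[n.minFac] n) + (1 / (n.minFac : ℝ)) * SF (n / n.minFac) := by
  rw [SF, key_split n hn (fun d => (1 : ℝ) / d), SF, SF, Finset.mul_sum]
  congr 1
  apply Finset.sum_congr rfl
  intro e _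
  push_cast
  rw [div_mul_div_comm, one_mul]

lemma minFac_mul_eq (n : ℕ) (hn : 2 ≤ n) {e : ℕ} (he : e ∣ n / n.minFac) :
    (n.minFac * e).minFac = n.minFac := by
  have hp0 : n.minFac.Prime := Nat.minFac_prime (by omega)
  have h1 : n.minFac * e ∣ n := by
    calc n.minFac * e ∣ n.minFac * (n / n.minFac) := mul_dvd_mul_left _ he
    _ = n := Nat.mul_div_cancel' (Nat.minFac_dvd n)
  have hepos : 0 < e := Nat.pos_of_dvd_of_pos he (Nat.div_pos (Nat.minFac_le (by omega)) hp0.pos)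
  have hne : n.minFac * e ≠ 1 := by
    have := hp0.two_le
    intro hc
    have := Nat.eq_one_of_mul_eq_one_right hc
    omega
  apply le_antisymm
  · exact Nat.minFac_le_of_dvd hp0.two_le ⟨e, rfl⟩
  · exact Nat.minFac_le_of_dvd (Nat.minFac_prime hne).two_le
      ((Nat.minFac_dvd _).trans h1)

lemma alpha_split (n : ℕ) (hn : 2 ≤ n) :
    alphaFn n = alphaFn (ordCompl[n.minFac] n)
      + (((n.minFac : ℝ) - 1) / (n.minFac : ℝ)) * SF (n / n.minFac) := by
  rw [alphaFn, key_split n hn (fun d => ((d.minFac : ℝ) - 1) / d), SF, Finset.mul_sum]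
  rw [alphaFn]
  congr 1
  apply Finset.sum_congr rfl
  intro e he
  rw [Nat.mem_divisors] at he
  rw [minFac_mul_eq n hn he.1]
  push_cast
  rw [div_mul_div_comm, mul_one]

lemma main_bound : ∀ n : ℕ, 1 ≤ n → ∀ t : ℕ, (∀ p ∈ n.primeFactors, qp t ≤ p) →
    SF n ≤ Pp t n.primeFactors.card ∧ alphaFn n ≤ As t n.primeFactors.card := by
  intro n
  induction n using Nat.strong_induction_on with
  | _ n ih =>
    intro hn1 t hp
    rcases eq_or_lt_of_le hn1 with h1 | hn2
    · subst h1
      constructor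
      · simp [SF, Nat.divisors_one, Pp, As]
      · simp [alphaFn, Nat.divisors_one, Nat.minFac_one, As]
    · have hn0 : n ≠ 0 := by omega
      have hsplitS := SF_split n hn2
      have hsplitA := alpha_split n hn2
      have hp0 : n.minFac.Prime := Nat.minFac_prime (by omega)
      set p0 := n.minFac with hp0def
      set n' := n / p0 with hn'def
      set m := ordCompl[p0] n with hmdef
      have hmuln : p0 * n' = n := Nat.mul_div_cancel' (Nat.minFac_dvd n)
      have hm1 : 1 ≤ m := Nat.ordCompl_pos p0 hn0
      have hmdvd : m ∣ n := Nat.ordCompl_dvd n p0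
      have hn'1 : 1 ≤ n' := Nat.div_pos (Nat.minFac_le (by omega)) hp0.pos
      have hn'lt : n' < n := Nat.div_lt_self (by omega) hp0.one_lt
      have hmn' : m ∣ n' := by
        have h := hmdvd
        rw [← hmuln] at h
        exact (Nat.coprime_ordCompl hp0 hn0).symm.dvd_of_dvd_mul_left h
      have hmlt : m < n := lt_of_le_of_lt (Nat.le_of_dvd hn'1 hmn') hn'lt
      have pfm : m.primeFactors = n.primeFactors.erase p0 := by
        rw [hmdef, ← Nat.support_factorization, Nat.factorization_ordCompl n p0,
          Finsupp.support_erase, Nat.support_factorization]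
      have hp0mem : p0 ∈ n.primeFactors :=
        Nat.mem_primeFactors.mpr ⟨hp0, Nat.minFac_dvd n, hn0⟩
      obtain ⟨l', hl'⟩ : ∃ l', n.primeFactors.card = l' + 1 := by
        have : 0 < n.primeFactors.card := Finset.card_pos.mpr ⟨p0, hp0mem⟩
        exact ⟨n.primeFactors.card - 1, by omega⟩
      have cardm : m.primeFactors.card = l' := by
        rw [pfm, Finset.card_erase_of_mem hp0mem, hl']
        omega
      set t' := Nat.count Nat.Prime p0 with ht'def
      have hqt' : qp t' = p0 := qp_count hp0
      have htt' : t ≤ t' := le_count hp0 (hp p0 hp0mem)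
      have hminle : ∀ p ∈ n.primeFactors, p0 ≤ p := by
        intro p hpp
        exact Nat.minFac_le_of_dvd (Nat.mem_primeFactors.mp hpp).1.two_le
          (Nat.mem_primeFactors.mp hpp).2.1
      have hpm : ∀ p ∈ m.primeFactors, qp (t' + 1) ≤ p := by
        intro p hpp
        rw [pfm, Finset.mem_erase] at hpp
        have h1 : p0 < p := lt_of_le_of_ne (hminle p hpp.2) (Ne.symm hpp.1)
        exact qp_succ_le (Nat.mem_primeFactors.mp hpp.2).1 (by rw [hqt']; exact h1)
      have IHm := ih m hmlt hm1 (t' + 1) hpm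
      rw [cardm] at IHm
      have hP2 : (2 : ℝ) ≤ (p0 : ℝ) := by exact_mod_cast hp0.two_le
      have hPne : (p0 : ℝ) ≠ 0 := by linarith
      have hPm1 : (p0 : ℝ) - 1 ≠ 0 := by linarith
      have hcFt' : cF t' = (p0 : ℝ) / ((p0 : ℝ) - 1) := by rw [cF, hqt']
      have hPp_pos := Pp_pos (t' + 1) l'
      rw [hl']
      by_cases hdvd' : p0 ∣ n'
      · -- p0 still divides n'
        have pfn' : n'.primeFactors = n.primeFactors := by
          apply subset_antisymm
          · exact Nat.primeFactors_mono (Nat.div_dvd_of_dvd (Nat.minFac_dvd n)) hn0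
          · intro r hr
            obtain ⟨hrp, hrn, -⟩ := Nat.mem_primeFactors.mp hr
            refine Nat.mem_primeFactors.mpr ⟨hrp, ?_, by omega⟩
            by_cases hr0 : r = p0
            · subst hr0; exact hdvd'
            · have hrm : r ∈ m.primeFactors := by
                rw [pfm, Finset.mem_erase]
                exact ⟨hr0, hr⟩
              exact (Nat.mem_primeFactors.mp hrm).2.1.trans hmn'
        have hpn' : ∀ p ∈ n'.primeFactors, qp t' ≤ p := by
          intro p hpp
          rw [pfn'] at hpp
          rw [hqt']
          exact hminle p hpp
        have IHn' := ih n' hn'lt hn'1 t' hpn'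
        rw [pfn', hl'] at IHn'
        have hkeyS : (1 : ℝ) + 1 / (p0 : ℝ) * cF t' = cF t' := by
          rw [hcFt']
          field_simp
          ring
        have hkeyA : ((p0 : ℝ) - 1) / (p0 : ℝ) * cF t' = 1 := by
          rw [hcFt']
          field_simp
        constructor
        · calc SF n = SF m + 1 / (p0 : ℝ) * SF n' := hsplitS
            _ ≤ Pp (t' + 1) l' + 1 / (p0 : ℝ) * Pp t' (l' + 1) := by
                have h1 : (0 : ℝ) ≤ 1 / (p0 : ℝ) := by positivity
                exact add_le_add IHm.1 (mul_le_mul_of_nonneg_left IHn'.1 h1)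
            _ = (1 + 1 / (p0 : ℝ) * cF t') * Pp (t' + 1) l' := by
                rw [Pp_succ]; ring
            _ = cF t' * Pp (t' + 1) l' := by rw [hkeyS]
            _ = Pp t' (l' + 1) := (Pp_succ t' l').symm
            _ ≤ Pp t (l' + 1) := Pp_anti htt' _
        · calc alphaFn n = alphaFn m + ((p0 : ℝ) - 1) / (p0 : ℝ) * SF n' := hsplitA
            _ ≤ As (t' + 1) l' + ((p0 : ℝ) - 1) / (p0 : ℝ) * Pp t' (l' + 1) := by
                have h1 : (0 : ℝ) ≤ ((p0 : ℝ) - 1) / (p0 : ℝ) :=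
                  div_nonneg (by linarith) (by linarith)
                exact add_le_add IHm.2 (mul_le_mul_of_nonneg_left IHn'.1 h1)
            _ = As (t' + 1) l' + (((p0 : ℝ) - 1) / (p0 : ℝ) * cF t') * Pp (t' + 1) l' := by
                rw [Pp_succ]; ring
            _ = As (t' + 1) l' + Pp (t' + 1) l' := by rw [hkeyA, one_mul]
            _ = As t' (l' + 1) := by rw [As_succ]; ring
            _ ≤ As t (l' + 1) := As_anti htt' _
      · -- n' = m
        have hn'm : n' = m :=
          Nat.dvd_antisymm
            (Nat.dvd_ordCompl_of_dvd_not_dvd (Nat.div_dvd_of_dvd (Nat.minFac_dvd n)) hdvd')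
            hmn'
        rw [hn'm] at hsplitS hsplitA
        have hSm0 : 0 ≤ SF m := SF_nonneg m
        have hle1 : (1 : ℝ) + 1 / (p0 : ℝ) ≤ cF t' := by
          rw [hcFt']
          have h1 : (0 : ℝ) < (p0 : ℝ) - 1 := by linarith
          rw [le_div_iff₀ (by linarith : (0:ℝ) < (p0:ℝ) - 1)]
          have hinv : 1 / (p0 : ℝ) * (p0 : ℝ) = 1 := by field_simp
          nlinarith [hinv, (by positivity : (0:ℝ) ≤ 1 / (p0:ℝ))]
        constructor
        · calc SF n = SF m + 1 / (p0 : ℝ) * SF m := hsplitS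
            _ = (1 + 1 / (p0 : ℝ)) * SF m := by ring
            _ ≤ cF t' * Pp (t' + 1) l' := by
                apply mul_le_mul hle1 IHm.1 hSm0 (cF_pos t').le
            _ = Pp t' (l' + 1) := (Pp_succ t' l').symm
            _ ≤ Pp t (l' + 1) := Pp_anti htt' _
        · calc alphaFn n = alphaFn m + ((p0 : ℝ) - 1) / (p0 : ℝ) * SF m := hsplitA
            _ ≤ As (t' + 1) l' + 1 * Pp (t' + 1) l' := by
                apply add_le_add IHm.2
                apply mul_le_mul _ IHm.1 hSm0 (by norm_num)
                rw [div_le_one (by linarith)]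
                linarith
            _ = As t' (l' + 1) := by rw [one_mul, As_succ]; ring
            _ ≤ As t (l' + 1) := As_anti htt' _

lemma beta_sorted : ∀ (l t : ℕ) (s : Finset ℕ), s.card = l → (∀ p ∈ s, p.Prime) →
    (∀ p ∈ s, qp t ≤ p) →
    ∑ i ∈ Finset.range l, ((qp (t + i) : ℝ) - 1) / (qp (t + i)) ≤
      ∑ p ∈ s, ((p : ℝ) - 1) / p := by
  intro l
  induction l with
  | zero =>
    intro t s hcard _ _
    have : s = ∅ := Finset.card_eq_zero.mp hcard
    simp [this]
  | succ k IH =>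
    intro t s hcard hprime hge
    have hne : s.Nonempty := Finset.card_pos.mp (by omega)
    set p1 := s.min' hne with hp1def
    have hp1mem : p1 ∈ s := Finset.min'_mem s hne
    have herase : (s.erase p1).card = k := by
      rw [Finset.card_erase_of_mem hp1mem, hcard]
      omega
    have hstep := IH (t + 1) (s.erase p1) herase
      (fun p hp => hprime p (Finset.mem_of_mem_erase hp))
      (by
        intro p hp
        have hpmem := Finset.mem_of_mem_erase hp
        have h1 : p1 ≤ p := Finset.min'_le s p hpmem
        have h2 : p1 < p := lt_of_le_of_ne h1 (Ne.symm (Finset.ne_of_mem_erase hp))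
        exact qp_succ_le (hprime p hpmem) (lt_of_le_of_lt (hge p1 hp1mem) h2))
    rw [Finset.sum_range_succ' (fun i => ((qp (t + i) : ℝ) - 1) / (qp (t + i))) k]
    rw [← Finset.sum_erase_add s _ hp1mem]
    apply add_le_add
    · refine le_trans (le_of_eq ?_) hstep
      apply Finset.sum_congr rfl
      intro i _
      have : t + (i + 1) = t + 1 + i := by omega
      rw [this]
    · have hqpos : (0 : ℝ) < (qp (t + 0) : ℝ) := by
        have := two_le_qpR (t + 0); linarith
      exact real_beta_mono hqpos (by exact_mod_cast hge p1 hp1mem)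

lemma primeFactors_subset_divisors' (n : ℕ) : n.primeFactors ⊆ n.divisors := by
  intro p hp
  obtain ⟨_, h1, h2⟩ := Nat.mem_primeFactors.mp hp
  exact Nat.mem_divisors.mpr ⟨h1, h2⟩

end Aux

theorem stmt9 (n l : ℕ) (hn : 2 ≤ n) (hl : n.primeFactors.card = l) :
    betaSeq l ≤ betaFn n ∧ betaFn n ≤ alphaFn n ∧ alphaFn n ≤ alphaSeq l := by
  subst hl
  have hn0 : n ≠ 0 := by omega
  refine ⟨?_, ?_, ?_⟩
  · -- betaSeq ≤ betaFn
    have h := beta_sorted n.primeFactors.card 0 n.primeFactors rfl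
      (fun p hp => (Nat.mem_primeFactors.mp hp).1)
      (fun p hp => qp_le_of_prime (Nat.mem_primeFactors.mp hp).1)
    rw [betaSeq, betaFn]
    refine le_trans (le_of_eq ?_) h
    apply Finset.sum_congr rfl
    intro i _
    have : nthPrime (i + 1) = qp (0 + i) := by
      simp [nthPrime, qp]
    rw [this]
  · -- betaFn ≤ alphaFn
    rw [betaFn, alphaFn]
    calc ∑ p ∈ n.primeFactors, ((p : ℝ) - 1) / p
        = ∑ p ∈ n.primeFactors, ((p.minFac : ℝ) - 1) / p := by
          apply Finset.sum_congr rfl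
          intro p hp
          rw [Nat.Prime.minFac_eq (Nat.mem_primeFactors.mp hp).1]
      _ ≤ ∑ d ∈ n.divisors, ((d.minFac : ℝ) - 1) / d := by
          apply Finset.sum_le_sum_of_subset_of_nonneg (primeFactors_subset_divisors' n)
          intro d _ _
          apply div_nonneg _ (Nat.cast_nonneg d)
          have : 1 ≤ d.minFac := Nat.minFac_pos d
          have : (1 : ℝ) ≤ (d.minFac : ℝ) := by exact_mod_cast this
          linarith
  · -- alphaFn ≤ alphaSeq
    have h := (main_bound n (by omega) 0
      (fun p hp => qp_le_of_prime (Nat.mem_primeFactors.mp hp).1)).2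
    rw [As_eq_alphaSeq] at h
    exact h
end

section
/- For every integer l ≥ 1, l ≤ α_l ≤ (α_9/9)·l, where α_9/9 = 166822111/109486080. -/
open scoped BigOperators

private lemma nth_prime_val {n v : ℕ} (hv : Nat.Prime v) (hc : Nat.count Nat.Prime v = n) :
    Nat.nth Nat.Prime n = v := by
  have h := Nat.nth_count hv; rwa [hc] at h

private lemma nth0 : Nat.nth Nat.Prime 0 = 2 := nth_prime_val (by norm_num) (by decide)
private lemma nth1 : Nat.nth Nat.Prime 1 = 3 := nth_prime_val (by norm_num) (by decide)
private lemma nth2 : Nat.nth Nat.Prime 2 = 5 := nth_prime_val (by norm_num) (by decide)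
private lemma nth3 : Nat.nth Nat.Prime 3 = 7 := nth_prime_val (by norm_num) (by decide)
private lemma nth4 : Nat.nth Nat.Prime 4 = 11 := nth_prime_val (by norm_num) (by decide)
private lemma nth5 : Nat.nth Nat.Prime 5 = 13 := nth_prime_val (by norm_num) (by decide)
private lemma nth6 : Nat.nth Nat.Prime 6 = 17 := nth_prime_val (by norm_num) (by decide)
private lemma nth7 : Nat.nth Nat.Prime 7 = 19 := nth_prime_val (by norm_num) (by decide)
private lemma nth8 : Nat.nth Nat.Prime 8 = 23 := nth_prime_val (by norm_num) (by decide)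
private lemma nth9 : Nat.nth Nat.Prime 9 = 29 := nth_prime_val (by norm_num) (by decide)
private lemma nth10 : Nat.nth Nat.Prime 10 = 31 := nth_prime_val (by norm_num) (by decide)

private lemma not_three_dvd {q : ℕ} (hq : q.Prime) (h5 : 5 ≤ q) : ¬ 3 ∣ q := by
  intro h
  rcases (Nat.prime_dvd_prime_iff_eq (by norm_num) hq).mp h with h'
  omega

private lemma odd_mod {q : ℕ} (hq : q.Prime) (h5 : 5 ≤ q) : q % 2 = 1 := by
  have := hq.eq_one_or_self_of_dvd 2
  rcases Nat.even_or_odd q with he | ho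
  · exfalso
    rcases he with ⟨m, hm⟩
    have : 2 ∣ q := ⟨m, by omega⟩
    rcases hq.eq_one_or_self_of_dvd 2 this with h | h <;> omega
  · exact Nat.odd_iff.mp ho

private lemma prime_gap (k : ℕ) (hk : 5 ≤ Nat.nth Nat.Prime k) :
    Nat.nth Nat.Prime k + 6 ≤ Nat.nth Nat.Prime (k + 2) := by
  set p := Nat.nth Nat.Prime k with hp
  set q := Nat.nth Nat.Prime (k + 1) with hqd
  set r := Nat.nth Nat.Prime (k + 2) with hrd
  have hpp : p.Prime := Nat.prime_nth_prime k
  have hqq : q.Prime := Nat.prime_nth_prime (k + 1)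
  have hrr : r.Prime := Nat.prime_nth_prime (k + 2)
  have hpq : p < q := (Nat.nth_lt_nth Nat.infinite_setOf_prime).mpr (by omega)
  have hqr : q < r := (Nat.nth_lt_nth Nat.infinite_setOf_prime).mpr (by omega)
  have hq5 : 5 ≤ q := by omega
  have hr5 : 5 ≤ r := by omega
  have h2p : p % 2 = 1 := odd_mod hpp hk
  have h2q : q % 2 = 1 := odd_mod hqq hq5
  have h2r : r % 2 = 1 := odd_mod hrr hr5
  have h3p : ¬ 3 ∣ p := not_three_dvd hpp hk
  have h3q : ¬ 3 ∣ q := not_three_dvd hqq hq5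
  have h3r : ¬ 3 ∣ r := not_three_dvd hrr hr5
  by_contra hcon
  have hq2 : q = p + 2 ∧ r = p + 4 := by omega
  rw [hq2.1] at h3q
  rw [hq2.2] at h3r
  have hm1 : p % 3 ≠ 0 := fun h => h3p (Nat.dvd_of_mod_eq_zero h)
  rcases (by omega : p % 3 = 1 ∨ p % 3 = 2) with h | h
  · exact h3q (Nat.dvd_of_mod_eq_zero (by omega))
  · exact h3r (Nat.dvd_of_mod_eq_zero (by omega))

private lemma nth_ge : ∀ k, 9 ≤ k → 3 * k + 1 ≤ Nat.nth Nat.Prime k := by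
  intro k
  induction k using Nat.strong_induction_on with
  | _ k ih =>
    intro hk
    match k, hk with
    | 9, _ => rw [nth9]; omega
    | 10, _ => rw [nth10]
    | (m + 11), _ =>
      have h2 := ih (m + 9) (by omega) (by omega)
      have h3 : 5 ≤ Nat.nth Nat.Prime (m + 9) := by omega
      have h4 := prime_gap (m + 9) h3
      have e : m + 9 + 2 = m + 11 := by omega
      rw [e] at h4
      omega

private lemma alpha_step (l : ℕ) (hl : 1 ≤ l) :
    alphaSeq (l + 1)
      = 1 + ((nthPrime (l + 1) : ℝ) / ((nthPrime (l + 1) : ℝ) - 1)) * alphaSeq l := by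
  obtain ⟨m, rfl⟩ : ∃ m, l = m + 1 := ⟨l - 1, by omega⟩
  rfl

private lemma nthPrime_succ (n : ℕ) : nthPrime (n + 1) = Nat.nth Nat.Prime n := by
  simp [nthPrime]

private lemma a1 : alphaSeq 1 = 1 := rfl
private lemma a2 : alphaSeq 2 = 5 / 2 := by
  have h := alpha_step 1 le_rfl
  rw [h, nthPrime_succ, nth1, a1]; norm_num
private lemma a3 : alphaSeq 3 = 33 / 8 := by
  have h := alpha_step 2 (by norm_num)
  rw [h, nthPrime_succ, nth2, a2]; norm_num
private lemma a4 : alphaSeq 4 = 93 / 16 := by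
  have h := alpha_step 3 (by norm_num)
  rw [h, nthPrime_succ, nth3, a3]; norm_num
private lemma a5 : alphaSeq 5 = 1183 / 160 := by
  have h := alpha_step 4 (by norm_num)
  rw [h, nthPrime_succ, nth4, a4]; norm_num
private lemma a6 : alphaSeq 6 = 17299 / 1920 := by
  have h := alpha_step 5 (by norm_num)
  rw [h, nthPrime_succ, nth5, a5]; norm_num
private lemma a7 : alphaSeq 7 = 324803 / 30720 := by
  have h := alpha_step 6 (by norm_num)
  rw [h, nthPrime_succ, nth6, a6]; norm_num
private lemma a8 : alphaSeq 8 = 6724217 / 552960 := by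
  have h := alpha_step 7 (by norm_num)
  rw [h, nthPrime_succ, nth7, a7]; norm_num
private lemma a9 : alphaSeq 9 = 166822111 / 12165120 := by
  have h := alpha_step 8 (by norm_num)
  rw [h, nthPrime_succ, nth8, a8]; norm_num

private lemma alpha_lower : ∀ l : ℕ, 1 ≤ l → (l : ℝ) ≤ alphaSeq l := by
  intro l hl
  induction l, hl using Nat.le_induction with
  | base => rw [a1]; norm_num
  | succ n hn ih =>
    rw [alpha_step n hn, nthPrime_succ]
    have hP : (2 : ℝ) ≤ (Nat.nth Nat.Prime n : ℝ) := by
      exact_mod_cast (Nat.prime_nth_prime n).two_le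
    set P := (Nat.nth Nat.Prime n : ℝ) with hPd
    have h1 : 1 ≤ P / (P - 1) := by
      rw [le_div_iff₀ (by linarith)]; linarith
    have hn1 : (1 : ℝ) ≤ (n : ℝ) := by exact_mod_cast hn
    have h0 : (0 : ℝ) ≤ alphaSeq n := by linarith
    have h2 : alphaSeq n ≤ P / (P - 1) * alphaSeq n := le_mul_of_one_le_left h0 h1
    push_cast
    linarith

private lemma alpha_upper : ∀ l : ℕ, 1 ≤ l → alphaSeq l ≤ (166822111 / 109486080 : ℝ) * l := by
  intro l hl
  induction l, hl using Nat.le_induction with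
  | base => rw [a1]; norm_num
  | succ n hn ih =>
    rcases le_or_gt (n + 1) 9 with h9 | h9
    · have hub : n ≤ 8 := by omega
      interval_cases n <;> norm_num [a2, a3, a4, a5, a6, a7, a8, a9]
    · rw [alpha_step n hn, nthPrime_succ]
      have hp : 3 * n + 1 ≤ Nat.nth Nat.Prime n := nth_ge n (by omega)
      have hPr : (3 * (n : ℝ) + 1) ≤ (Nat.nth Nat.Prime n : ℝ) := by exact_mod_cast hp
      set P := (Nat.nth Nat.Prime n : ℝ) with hPd
      have hn9 : (9 : ℝ) ≤ (n : ℝ) := by exact_mod_cast (by omega : (9 : ℕ) ≤ n)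
      have hP1 : (0 : ℝ) < P - 1 := by linarith
      have hα0 : (0 : ℝ) ≤ alphaSeq n := le_trans (by linarith) (alpha_lower n hn)
      set c : ℝ := (166822111 / 109486080 : ℝ) with hc
      have key : P / (P - 1) * alphaSeq n ≤ P / (P - 1) * (c * n) :=
        mul_le_mul_of_nonneg_left ih (by positivity)
      have h2 : P / (P - 1) * (c * n) ≤ c * n + c / 3 := by
        rw [div_mul_eq_mul_div, div_le_iff₀ hP1]
        have hcpos : (0 : ℝ) < c := by norm_num [hc]
        nlinarith [hPr, hn9, hcpos]
      have h3 : (1 : ℝ) + c / 3 ≤ c := by norm_num [hc]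
      push_cast
      linarith

theorem stmt10 (l : ℕ) (hl : 1 ≤ l) :
    (l : ℝ) ≤ alphaSeq l ∧ alphaSeq l ≤ (166822111 / 109486080 : ℝ) * l := by
  exact ⟨alpha_lower l hl, alpha_upper l hl⟩
end

section
/- The sequences (α_l/l)_{l ≥ 1} and (β_l/l)_{l ≥ 1} both converge to 1 as l tends to infinity. -/
open scoped BigOperators

open Filter Finset

private noncomputable def primeEquiv : ℕ ≃ Nat.Primes :=
  { toFun := fun i => ⟨Nat.nth Nat.Prime i, Nat.prime_nth_prime i⟩
    invFun := fun p => Nat.count Nat.Prime p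
    left_inv := fun i => Nat.count_nth_of_infinite Nat.infinite_setOf_prime i
    right_inv := fun p => Subtype.ext (Nat.nth_count p.prop) }

private lemma not_summable_nth : ¬ Summable (fun i : ℕ => (1:ℝ)/(Nat.nth Nat.Prime i)) := by
  set e := primeEquiv with he'
  intro h
  apply Nat.Primes.not_summable_one_div
  have h2 := (Equiv.summable_iff e.symm).mpr h
  convert h2 using 1
  ext p
  simp only [Function.comp_apply]
  congr 1
  have he : e.symm p = Nat.count Nat.Prime p := rfl
  rw [he]
  exact_mod_cast (congrArg (Nat.cast (R := ℝ)) (Nat.nth_count (p := Nat.Prime) p.prop)).symm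

private lemma S_atTop : Tendsto (fun k => ∑ i ∈ range k, (1:ℝ)/(Nat.nth Nat.Prime i)) atTop atTop := by
  refine (not_summable_iff_tendsto_nat_atTop_of_nonneg ?_).mp not_summable_nth
  intro n; positivity

private lemma Q_tendsto : Tendsto (fun k => ∏ i ∈ range k, (1 - 1/(Nat.nth Nat.Prime i : ℝ))) atTop (nhds 0) := by
  have hp : ∀ i : ℕ, (2:ℝ) ≤ (Nat.nth Nat.Prime i : ℝ) := fun i => by
    exact_mod_cast (Nat.prime_nth_prime i).two_le
  have h0 : ∀ k, (0:ℝ) ≤ ∏ i ∈ range k, (1 - 1/(Nat.nth Nat.Prime i : ℝ)) := by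
    intro k
    refine Finset.prod_nonneg fun i _ => ?_
    have h1 := hp i
    have : (1:ℝ)/(Nat.nth Nat.Prime i : ℝ) ≤ 1 := by
      rw [div_le_one (by linarith)]; linarith
    linarith
  have hub : ∀ k, ∏ i ∈ range k, (1 - 1/(Nat.nth Nat.Prime i : ℝ)) ≤
      Real.exp (-(∑ i ∈ range k, (1:ℝ)/(Nat.nth Nat.Prime i))) := by
    intro k
    rw [show -(∑ i ∈ range k, (1:ℝ)/(Nat.nth Nat.Prime i)) = ∑ i ∈ range k, -((1:ℝ)/(Nat.nth Nat.Prime i)) by rw [Finset.sum_neg_distrib], Real.exp_sum]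
    refine Finset.prod_le_prod (fun i _ => ?_) (fun i _ => ?_)
    · have h1 := hp i
      have : (1:ℝ)/(Nat.nth Nat.Prime i : ℝ) ≤ 1 := by
        rw [div_le_one (by linarith)]; linarith
      linarith
    · have := Real.add_one_le_exp (-(1/(Nat.nth Nat.Prime i : ℝ)))
      linarith
  have hexp : Tendsto (fun k => Real.exp (-(∑ i ∈ range k, (1:ℝ)/(Nat.nth Nat.Prime i)))) atTop (nhds 0) :=
    Real.tendsto_exp_atBot.comp (tendsto_neg_atBot_iff.mpr S_atTop)
  exact tendsto_of_tendsto_of_tendsto_of_le_of_le tendsto_const_nhds hexp h0 hub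

private lemma totient_prod_eq (k : ℕ) :
    (Nat.totient (∏ i ∈ range k, Nat.nth Nat.Prime i) : ℝ) /
      (∏ i ∈ range k, Nat.nth Nat.Prime i : ℕ) =
    ∏ i ∈ range k, (1 - 1/(Nat.nth Nat.Prime i : ℝ)) := by
  have hprime : ∀ i : ℕ, Nat.Prime (Nat.nth Nat.Prime i) := Nat.prime_nth_prime
  have htot : ∀ k, Nat.totient (∏ i ∈ range k, Nat.nth Nat.Prime i)
      = ∏ i ∈ range k, (Nat.nth Nat.Prime i - 1) := by
    intro k
    induction k with
    | zero => simp
    | succ k ih =>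
      rw [prod_range_succ, prod_range_succ, Nat.totient_mul, ih,
        Nat.totient_prime (hprime k)]
      refine Nat.Coprime.prod_left fun i hi => ?_
      exact (Nat.coprime_primes (hprime i) (hprime k)).mpr
        (ne_of_lt ((Nat.nth_lt_nth Nat.infinite_setOf_prime).mpr (mem_range.mp hi)))
  rw [htot]
  push_cast [Nat.cast_prod]
  rw [← Finset.prod_div_distrib]
  refine Finset.prod_congr rfl fun i _ => ?_
  have h2 : (2:ℝ) ≤ (Nat.nth Nat.Prime i : ℝ) := by exact_mod_cast (hprime i).two_le
  have h1 : ((Nat.nth Nat.Prime i - 1 : ℕ) : ℝ) = (Nat.nth Nat.Prime i : ℝ) - 1 := by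
    have := (hprime i).two_le
    push_cast [Nat.cast_sub (by omega : 1 ≤ Nat.nth Nat.Prime i)]
    ring
  rw [h1]
  field_simp

set_option maxHeartbeats 1000000 in
private lemma pi_div_tendsto :
    Tendsto (fun n : ℕ => (Nat.primeCounting' n : ℝ)/n) atTop (nhds 0) := by
  rw [NormedAddCommGroup.tendsto_nhds_zero]
  intro ε hε
  obtain ⟨m, hm⟩ := (Q_tendsto.eventually (gt_mem_nhds (half_pos hε))).exists
  set a := ∏ i ∈ range m, Nat.nth Nat.Prime i with ha
  have ha0 : 0 < a := Finset.prod_pos fun i _ => (Nat.prime_nth_prime i).pos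
  set C : ℝ := (Nat.primeCounting' (a+1) : ℝ) + (Nat.totient a : ℝ) with hC
  have hQ : (Nat.totient a : ℝ) / a < ε/2 := by rw [ha, totient_prod_eq]; exact hm
  have key : ∀ n : ℕ, a + 1 ≤ n → (Nat.primeCounting' n : ℝ)/n ≤ C/n + ε/2 := by
    intro n hn
    have hn0 : (0:ℝ) < n := by
      have : 0 < n := by omega
      exact_mod_cast this
    have ha0' : (0:ℝ) < a := by exact_mod_cast ha0
    have hnat : Nat.primeCounting' n ≤ Nat.primeCounting' (a+1) + Nat.totient a * (n / a + 1) := by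
      have h := Nat.primeCounting'_add_le (a := a) (k := a+1) ha0.ne' (lt_add_one a) (n - (a+1))
      rw [Nat.add_sub_cancel' hn] at h
      refine h.trans ?_
      have hmono : (n - (a+1)) / a ≤ n / a := Nat.div_le_div_right (Nat.sub_le n _)
      have := Nat.mul_le_mul_left (Nat.totient a) (Nat.add_le_add_right hmono 1)
      omega
    have hcast : ((n / a : ℕ) : ℝ) ≤ (n:ℝ)/a := Nat.cast_div_le
    have h1 : (Nat.primeCounting' n : ℝ) ≤ C + (Nat.totient a : ℝ) * ((n:ℝ)/a) := by
      have h2 : (Nat.primeCounting' n : ℝ) ≤ (Nat.primeCounting' (a+1) : ℝ)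
          + (Nat.totient a : ℝ) * (((n / a : ℕ) : ℝ) + 1) := by exact_mod_cast hnat
      have h3 : (0:ℝ) ≤ (Nat.totient a : ℝ) := Nat.cast_nonneg _
      nlinarith
    calc (Nat.primeCounting' n : ℝ)/n ≤ (C + (Nat.totient a : ℝ) * ((n:ℝ)/a))/n := by
          gcongr
      _ = C/n + (Nat.totient a : ℝ) * ((n:ℝ)/a) / n := add_div _ _ _
      _ = C/n + (Nat.totient a : ℝ)/a := by
          congr 1
          field_simp
      _ ≤ C/n + ε/2 := by linarith
  have h2 : ∀ᶠ n : ℕ in atTop, (Nat.primeCounting' n : ℝ)/n ≤ C/n + ε/2 :=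
    eventually_atTop.mpr ⟨a+1, key⟩
  have h3 : Tendsto (fun n : ℕ => C/n + ε/2) atTop (nhds (0 + ε/2)) :=
    (tendsto_const_nhds.div_atTop tendsto_natCast_atTop_atTop).add tendsto_const_nhds
  have h4 : ∀ᶠ n : ℕ in atTop, C/n + ε/2 < ε := h3.eventually (gt_mem_nhds (by linarith))
  filter_upwards [h2, h4] with n h2 h4
  rw [Real.norm_of_nonneg (by positivity)]
  linarith

private lemma nth_div_tendsto : Tendsto (fun k : ℕ => (k:ℝ)/(Nat.nth Nat.Prime k)) atTop (nhds 0) := by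
  have hnth : Tendsto (fun k => Nat.nth Nat.Prime k) atTop atTop :=
    tendsto_atTop_mono (fun k => le_trans (Nat.le_add_right k 2) (Nat.add_two_le_nth_prime k))
      tendsto_id
  have h := pi_div_tendsto.comp hnth
  have heq : (fun k : ℕ => (k:ℝ)/(Nat.nth Nat.Prime k))
      = (fun n : ℕ => (Nat.primeCounting' n : ℝ)/n) ∘ (fun k => Nat.nth Nat.Prime k) := by
    funext k
    simp [Function.comp, Nat.primeCounting'_nth_eq]
  rw [heq]
  exact h


private lemma nth_ge_two_mul {k : ℕ} (hk : 1 ≤ k) : 2*k+1 ≤ Nat.nth Nat.Prime k := by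
  induction k with
  | zero => omega
  | succ k ih =>
    rcases Nat.eq_zero_or_pos k with h | h
    · subst h
      rw [Nat.nth_prime_one_eq_three]
    · have h1 := ih h
      have hlt : Nat.nth Nat.Prime k < Nat.nth Nat.Prime (k+1) :=
        (Nat.nth_lt_nth Nat.infinite_setOf_prime).mpr (lt_add_one k)
      have ho1 := (Nat.prime_nth_prime k).eq_two_or_odd
      have ho2 := (Nat.prime_nth_prime (k+1)).eq_two_or_odd
      omega

private lemma alpha_unfold (m : ℕ) :
    alphaSeq (m+2) = 1 + ((Nat.nth Nat.Prime (m+1) : ℝ) /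
      ((Nat.nth Nat.Prime (m+1) : ℝ) - 1)) * alphaSeq (m+1) := rfl

private lemma nth_q_lb (m : ℕ) : (2*m+3 : ℝ) ≤ (Nat.nth Nat.Prime (m+1) : ℝ) := by
  have := nth_ge_two_mul (k := m+1) (by omega)
  push_cast
  exact_mod_cast this

private lemma alpha_bounds : ∀ l : ℕ, 0 ≤ alphaSeq l ∧ alphaSeq l ≤ 2*l := by
  intro l
  induction l with
  | zero => simp [alphaSeq]
  | succ n ih =>
    match n, ih with
    | 0, _ => norm_num [alphaSeq]
    | (m+1), ih =>
      obtain ⟨h0, h2⟩ := ih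
      set q : ℝ := (Nat.nth Nat.Prime (m+1) : ℝ) with hqdef
      have hq : (2*m+3 : ℝ) ≤ q := nth_q_lb m
      have hm0 : (0:ℝ) ≤ (m:ℝ) := Nat.cast_nonneg m
      have hq1 : (1:ℝ) < q := by linarith
      rw [alpha_unfold m]
      push_cast at h2 ⊢
      constructor
      · have hr : (0:ℝ) ≤ q/(q-1) := div_nonneg (by linarith) (by linarith)
        have := mul_nonneg hr h0
        linarith
      · have h5 : q * alphaSeq (m+1) ≤ (2*(m:ℝ)+3)*(q-1) := by
          nlinarith [mul_le_mul_of_nonneg_left h2 (show (0:ℝ) ≤ q by linarith)]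
        have h6 : (q * alphaSeq (m+1))/(q-1) ≤ 2*(m:ℝ)+3 := by
          rw [div_le_iff₀ (by linarith : (0:ℝ) < q-1)]
          linarith
        rw [div_mul_eq_mul_div]
        linarith

private lemma alpha_step_s12 (m : ℕ) :
    alphaSeq (m+2) - alphaSeq (m+1)
      = 1 + alphaSeq (m+1)/((Nat.nth Nat.Prime (m+1) : ℝ) - 1) := by
  have hq : (2*m+3 : ℝ) ≤ (Nat.nth Nat.Prime (m+1) : ℝ) := nth_q_lb m
  have hm0 : (0:ℝ) ≤ (m:ℝ) := Nat.cast_nonneg m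
  have hne : (Nat.nth Nat.Prime (m+1) : ℝ) - 1 ≠ 0 := by linarith
  rw [alpha_unfold m]
  field_simp
  ring

theorem stmt12 :
    Filter.Tendsto (fun l : ℕ => alphaSeq l / l) Filter.atTop (nhds 1) ∧
    Filter.Tendsto (fun l : ℕ => betaSeq l / l) Filter.atTop (nhds 1) := by
  constructor
  · set u : ℕ → ℝ := fun i => alphaSeq (i+1) - alphaSeq i with hu
    have hsum : ∀ n, ∑ i ∈ range n, u i = alphaSeq n := by
      intro n
      rw [hu, Finset.sum_range_sub]
      simp [alphaSeq]
    have hlow : ∀ i, 1 ≤ u i := by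
      intro i
      match i with
      | 0 => simp [hu, alphaSeq]
      | (m+1) =>
        have hq : (2*m+3 : ℝ) ≤ (Nat.nth Nat.Prime (m+1) : ℝ) := nth_q_lb m
        have hm0 : (0:ℝ) ≤ (m:ℝ) := Nat.cast_nonneg m
        have h0 := (alpha_bounds (m+1)).1
        have := div_nonneg h0 (by linarith : (0:ℝ) ≤ (Nat.nth Nat.Prime (m+1) : ℝ) - 1)
        have hstep := alpha_step_s12 m
        simp only [hu]
        linarith
    have hupp : ∀ i, 1 ≤ i → u i ≤ 1 + 4*(i:ℝ)/(Nat.nth Nat.Prime i) := by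
      intro i hi
      match i, hi with
      | (m+1), _ =>
        have hq : (2*m+3 : ℝ) ≤ (Nat.nth Nat.Prime (m+1) : ℝ) := nth_q_lb m
        have hm0 : (0:ℝ) ≤ (m:ℝ) := Nat.cast_nonneg m
        obtain ⟨h0, h2⟩ := alpha_bounds (m+1)
        set q : ℝ := (Nat.nth Nat.Prime (m+1) : ℝ)
        have hstep := alpha_step_s12 m
        have hkey : alphaSeq (m+1)/(q-1) ≤ 4*((m:ℝ)+1)/q := by
          rw [div_le_div_iff₀ (by linarith : (0:ℝ) < q-1) (by linarith : (0:ℝ) < q)]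
          push_cast at h2
          nlinarith
        simp only [hu]
        push_cast
        linarith
    have hub_t : Tendsto (fun i : ℕ => 1 + 4*(i:ℝ)/(Nat.nth Nat.Prime i)) atTop (nhds 1) := by
      have h4 : Tendsto (fun i : ℕ => 4*((i:ℝ)/(Nat.nth Nat.Prime i))) atTop (nhds (4*0)) :=
        nth_div_tendsto.const_mul 4
      have := (tendsto_const_nhds (x := (1:ℝ)) (f := atTop)).add h4
      norm_num at this
      refine this.congr fun i => ?_
      ring
    have hu_t : Tendsto u atTop (nhds 1) :=
      tendsto_of_tendsto_of_tendsto_of_le_of_le' tendsto_const_nhds hub_t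
        (Eventually.of_forall hlow) (eventually_atTop.mpr ⟨1, hupp⟩)
    refine hu_t.cesaro.congr fun n => ?_
    rw [hsum, inv_mul_eq_div]
  · have hv : Tendsto (fun i : ℕ => ((nthPrime (i+1) : ℝ) - 1) / (nthPrime (i+1))) atTop (nhds 1) := by
      have hnth : Tendsto (fun i : ℕ => (Nat.nth Nat.Prime i : ℝ)) atTop atTop :=
        tendsto_natCast_atTop_atTop.comp
          (tendsto_atTop_mono (fun k => le_trans (Nat.le_add_right k 2) (Nat.add_two_le_nth_prime k))
            tendsto_id)
      have hinv : Tendsto (fun i : ℕ => 1/(Nat.nth Nat.Prime i : ℝ)) atTop (nhds 0) :=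
        tendsto_const_nhds.div_atTop hnth
      have h1 := (tendsto_const_nhds (x := (1:ℝ)) (f := atTop)).sub hinv
      norm_num at h1
      refine h1.congr fun i => ?_
      have hp2 : (2:ℝ) ≤ (Nat.nth Nat.Prime i : ℝ) := by
        exact_mod_cast (Nat.prime_nth_prime i).two_le
      show 1 - ((Nat.nth Nat.Prime i : ℝ))⁻¹ = ((nthPrime (i+1) : ℝ) - 1) / (nthPrime (i+1))
      simp only [nthPrime, Nat.add_sub_cancel]
      rw [inv_eq_one_div]
      field_simp
    refine hv.cesaro.congr fun n => ?_
    rw [inv_mul_eq_div]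
    rfl
end

section
/- Fix an integer l ≥ 1. For every real ε > 0 there exists N such that every integer n ≥ 2 with ω(n) = l and P^-(n) ≥ N satisfies |α(n) − l| < ε and |β(n) − l| < ε. -/
open scoped BigOperators

attribute [local instance] Classical.propDecidable

private lemma bern_aux (l : ℕ) {x : ℝ} (hx : 0 ≤ x) (hx1 : x ≤ 1) :
    (1 + x) ^ l ≤ 1 + ((2:ℝ) ^ l - 1) * x := by
  induction l with
  | zero => simp
  | succ k ih =>
    have h1 : (1:ℝ) ≤ 2 ^ k := one_le_pow₀ (by norm_num)
    have h0 : (0:ℝ) ≤ 1 + x := by linarith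
    have key := mul_le_mul_of_nonneg_right ih h0
    have hxx : x * x ≤ x := by nlinarith
    rw [pow_succ, pow_succ]
    nlinarith [key, hxx, h1]

private lemma factor_le (p a N : ℕ) (hp : p.Prime) (hN : 2 ≤ N) (hNp : N ≤ p) :
    (∑ k ∈ Finset.range (a + 1), (p:ℝ) ^ k) / (p:ℝ) ^ a ≤ 1 + 1 / ((N:ℝ) - 1) := by
  have hNR : (2:ℝ) ≤ (N:ℝ) := by exact_mod_cast hN
  have hpR : (N:ℝ) ≤ (p:ℝ) := by exact_mod_cast hNp
  have hp2 : (2:ℝ) ≤ (p:ℝ) := le_trans hNR hpR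
  have hd1 : (0:ℝ) < (p:ℝ) - 1 := by linarith
  have hd2 : (0:ℝ) < (p:ℝ) ^ a := by positivity
  have hN1 : (0:ℝ) < (N:ℝ) - 1 := by linarith
  have hpne : (p:ℝ) ≠ 1 := by linarith
  rw [geom_sum_eq hpne, div_div, div_le_iff₀ (by positivity)]
  have h1N : 1 / ((p:ℝ) - 1) ≤ 1 / ((N:ℝ) - 1) :=
    one_div_le_one_div_of_le hN1 (by linarith)
  have key : (1 + 1 / ((p:ℝ) - 1)) * (((p:ℝ) - 1) * (p:ℝ) ^ a) = (p:ℝ) ^ (a + 1) := by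
    field_simp
    ring
  have h2 := mul_le_mul_of_nonneg_right (by linarith : (1 + 1/((p:ℝ)-1)) ≤ 1 + 1/((N:ℝ)-1))
    (le_of_lt (mul_pos hd1 hd2))
  linarith [h2, key.symm.le]

private lemma sum_inv_div_le (n N : ℕ) (hn : n ≠ 0) (hN : 2 ≤ N)
    (hmin : ∀ p ∈ n.primeFactors, N ≤ p) :
    ∑ d ∈ n.divisors, (1:ℝ) / d ≤ (1 + 1 / ((N:ℝ) - 1)) ^ n.primeFactors.card := by
  have hA : ∑ d ∈ n.divisors, (1:ℝ) / d = (∑ d ∈ n.divisors, (d:ℝ)) / n := by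
    rw [Finset.sum_div, ← Nat.sum_div_divisors n (fun d => (1:ℝ) / d)]
    apply Finset.sum_congr rfl
    intro d hd
    obtain ⟨hdvd, -⟩ := Nat.mem_divisors.mp hd
    have hd0 : (d:ℝ) ≠ 0 := by exact_mod_cast (Nat.pos_of_mem_divisors hd).ne'
    have : ((n / d : ℕ) : ℝ) = (n:ℝ) / d := by
      rw [Nat.cast_div hdvd hd0]
    rw [this, one_div_div]
  have hB : (∑ d ∈ n.divisors, (d:ℝ)) =
      ∏ p ∈ n.primeFactors, ∑ k ∈ Finset.range (n.factorization p + 1), (p:ℝ) ^ k := by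
    rw [← Nat.cast_sum, Nat.sum_divisors hn]
    push_cast
    rfl
  have hn' : (n:ℝ) = ∏ p ∈ n.primeFactors, (p:ℝ) ^ (n.factorization p) := by
    conv_lhs => rw [← Nat.factorization_prod_pow_eq_self hn]
    rw [Nat.factorization_prod_pow_eq_self hn]
    conv_lhs => rw [← Nat.factorization_prod_pow_eq_self hn]
    rw [Finsupp.prod, Nat.support_factorization]
    push_cast
    rfl
  rw [hA, hB, hn', ← Finset.prod_div_distrib]
  have hle : ∀ p ∈ n.primeFactors,
      (∑ k ∈ Finset.range (n.factorization p + 1), (p:ℝ) ^ k) / (p:ℝ) ^ (n.factorization p)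
        ≤ 1 + 1 / ((N:ℝ) - 1) := fun p hp =>
    factor_le p _ N (Nat.prime_of_mem_primeFactors hp) hN (hmin p hp)
  have hnonneg : ∀ p ∈ n.primeFactors,
      0 ≤ (∑ k ∈ Finset.range (n.factorization p + 1), (p:ℝ) ^ k) / (p:ℝ) ^ (n.factorization p) := by
    intro p hp
    have : (0:ℝ) ≤ (p:ℝ) := by positivity
    positivity
  calc ∏ p ∈ n.primeFactors,
      (∑ k ∈ Finset.range (n.factorization p + 1), (p:ℝ) ^ k) / (p:ℝ) ^ (n.factorization p)
      ≤ ∏ _p ∈ n.primeFactors, (1 + 1 / ((N:ℝ) - 1)) :=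
        Finset.prod_le_prod hnonneg hle
    _ = (1 + 1 / ((N:ℝ) - 1)) ^ n.primeFactors.card := Finset.prod_const _

set_option maxHeartbeats 1000000 in
theorem stmt13_aux (l : ℕ) (hl : 1 ≤ l) :
    ∀ ε : ℝ, 0 < ε → ∃ N : ℕ, ∀ n : ℕ, 2 ≤ n → n.primeFactors.card = l →
      N ≤ n.minFac → |(∑ d ∈ n.divisors, ((d.minFac : ℝ) - 1) / d) - l| < ε ∧
        |(∑ p ∈ n.primeFactors, ((p : ℝ) - 1) / p) - l| < ε := by
  intro ε hε
  obtain ⟨M, hM⟩ := exists_nat_gt ((l : ℝ) * 2 ^ l * 2 / ε)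
  refine ⟨M + 2, fun n hn2 hcard hminFac => ?_⟩
  have hn0 : n ≠ 0 := by omega
  set N : ℕ := M + 2 with hNdef
  have hNmem : ∀ p ∈ n.primeFactors, N ≤ p := by
    intro p hp
    exact le_trans hminFac (Nat.minFac_le_of_dvd (Nat.prime_of_mem_primeFactors hp).two_le
      (Nat.dvd_of_mem_primeFactors hp))
  have hK2 : (2:ℝ) ≤ (N:ℝ) := by exact_mod_cast (by omega : 2 ≤ N)
  have hMpos : (0:ℝ) < (M:ℝ) + 1 := by positivity
  have hM' : (l:ℝ) * 2 ^ l * 2 < ε * M := by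
    rw [div_lt_iff₀ hε] at hM; linarith
  have hbig : (l:ℝ) * 2 ^ l / ((M:ℝ) + 1) < ε / 2 := by
    rw [div_lt_div_iff₀ hMpos (by norm_num : (0:ℝ) < 2)]
    nlinarith
  have hlpos : (0:ℝ) < l := by exact_mod_cast hl
  -- β part
  set T : ℝ := ∑ p ∈ n.primeFactors, (1:ℝ) / p with hT
  have hbeta : (∑ p ∈ n.primeFactors, ((p : ℝ) - 1) / p) = l - T := by
    have hstep : (∑ p ∈ n.primeFactors, ((p : ℝ) - 1) / p)
        = ∑ p ∈ n.primeFactors, ((1:ℝ) - 1 / p) := by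
      apply Finset.sum_congr rfl
      intro p hp
      have hp0 : (p:ℝ) ≠ 0 := by
        exact_mod_cast (Nat.prime_of_mem_primeFactors hp).pos.ne'
      field_simp
    rw [hstep, Finset.sum_sub_distrib, Finset.sum_const, hcard, hT]
    simp
  have hT0 : 0 ≤ T := Finset.sum_nonneg fun p _ => by positivity
  have hTle : T ≤ (l:ℝ) / N := by
    rw [hT]
    calc ∑ p ∈ n.primeFactors, (1:ℝ) / p ≤ ∑ _p ∈ n.primeFactors, (1:ℝ) / N := by
          apply Finset.sum_le_sum
          intro p hp
          have h1 : (0:ℝ) < (N:ℝ) := by linarith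
          have h2 : (N:ℝ) ≤ (p:ℝ) := by exact_mod_cast hNmem p hp
          exact one_div_le_one_div_of_le h1 h2
      _ = (l:ℝ) / N := by rw [Finset.sum_const, hcard]; simp [div_eq_mul_inv]
  have hTsmall : T < ε / 2 := by
    have h2l : (1:ℝ) ≤ 2 ^ l := one_le_pow₀ (by norm_num)
    have : (l:ℝ) / N ≤ (l:ℝ) * 2 ^ l / ((M:ℝ) + 1) := by
      apply div_le_div₀ (by positivity) (by nlinarith) hMpos
      have : ((M:ℝ) + 2) ≤ (N:ℝ) := by rw [hNdef]; push_cast; linarith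
      linarith
    linarith
  have hbetaBound : |(∑ p ∈ n.primeFactors, ((p : ℝ) - 1) / p) - l| < ε := by
    rw [hbeta]
    rw [abs_sub_comm]
    rw [abs_of_nonneg (by linarith : (0:ℝ) ≤ (l:ℝ) - ((l:ℝ) - T))]
    linarith
  refine ⟨?_, hbetaBound⟩
  classical
  set f : ℕ → ℝ := fun d => ((d.minFac : ℝ) - 1) / d with hf
  have hsplit : ∑ d ∈ n.divisors, f d =
      (∑ d ∈ n.divisors.filter Nat.Prime, f d) +
      ∑ d ∈ n.divisors.filter (fun d => ¬ d.Prime), f d :=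
    (Finset.sum_filter_add_sum_filter_not _ _ _).symm
  have hpf : n.divisors.filter Nat.Prime = n.primeFactors :=
    (Nat.primeFactors_eq_to_filter_divisors_prime n).symm
  have hprimesum : (∑ d ∈ n.divisors.filter Nat.Prime, f d)
      = ∑ p ∈ n.primeFactors, ((p:ℝ) - 1) / p := by
    rw [hpf]
    refine Finset.sum_congr rfl fun p hp => ?_
    simp [hf, (Nat.prime_of_mem_primeFactors hp).minFac_eq]
  set Bad := n.divisors.filter (fun d => ¬ d.Prime ∧ d ≠ 1) with hBad
  have hnp : ∑ d ∈ n.divisors.filter (fun d => ¬ d.Prime), f d = ∑ d ∈ Bad, f d := by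
    symm
    apply Finset.sum_subset
    · intro d hd
      rw [hBad, Finset.mem_filter] at hd
      rw [Finset.mem_filter]
      exact ⟨hd.1, hd.2.1⟩
    · intro d hd hnd
      rw [Finset.mem_filter] at hd
      rw [hBad, Finset.mem_filter] at hnd
      have hd1 : d = 1 := by tauto
      subst hd1
      simp [hf, Nat.minFac_one]
  have hfnonneg : ∀ d ∈ n.divisors, 0 ≤ f d := by
    intro d hd
    have h1 : (1:ℝ) ≤ (d.minFac : ℝ) := by exact_mod_cast Nat.minFac_pos d
    have h2 : (0:ℝ) ≤ (d:ℝ) := by positivity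
    exact div_nonneg (by linarith) h2
  have hB0 : 0 ≤ ∑ d ∈ Bad, f d :=
    Finset.sum_nonneg fun d hd => hfnonneg d (Finset.mem_filter.mp hd).1
  have hstep1 : ∀ d ∈ Bad, f d ≤ (1:ℝ) / ((d / d.minFac : ℕ) : ℝ) := by
    intro d hd
    rw [hBad, Finset.mem_filter, Nat.mem_divisors] at hd
    obtain ⟨⟨hdvd, -⟩, hnp', hne1⟩ := hd
    have hdpos : 0 < d := Nat.pos_of_dvd_of_pos hdvd (by omega)
    have hmf := Nat.minFac_dvd d
    have hq : d.minFac * (d / d.minFac) = d := Nat.mul_div_cancel' hmf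
    have hqpos : 0 < d / d.minFac := Nat.div_pos (Nat.le_of_dvd hdpos hmf) (Nat.minFac_pos d)
    have hmfpos : 0 < d.minFac := Nat.minFac_pos d
    have hdR : (d:ℝ) = (d.minFac : ℝ) * ((d / d.minFac : ℕ) : ℝ) := by exact_mod_cast hq.symm
    have hmR : (0:ℝ) < ((d / d.minFac : ℕ) : ℝ) := by exact_mod_cast hqpos
    have hfR : (0:ℝ) < (d.minFac : ℝ) := by exact_mod_cast hmfpos
    show ((d.minFac : ℝ) - 1) / d ≤ (1:ℝ) / ((d / d.minFac : ℕ) : ℝ)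
    rw [hdR, div_le_div_iff₀ (by positivity) hmR]
    nlinarith
  have hinj : ∀ x ∈ Bad, ∀ y ∈ Bad,
      (fun d => ((d.minFac, d / d.minFac) : ℕ × ℕ)) x = (fun d => ((d.minFac, d / d.minFac) : ℕ × ℕ)) y → x = y := by
    intro x hx y hy hxy
    have hxy' : (x.minFac, x / x.minFac) = (y.minFac, y / y.minFac) := hxy
    rw [Prod.mk.injEq] at hxy'
    obtain ⟨h1, h2⟩ := hxy'
    calc x = x.minFac * (x / x.minFac) := (Nat.mul_div_cancel' (Nat.minFac_dvd x)).symm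
      _ = y.minFac * (y / y.minFac) := by rw [h2, h1]
      _ = y := Nat.mul_div_cancel' (Nat.minFac_dvd y)
  have hstep2 : (∑ x ∈ Bad.image (fun d => ((d.minFac, d / d.minFac) : ℕ × ℕ)), (1:ℝ) / (x.2 : ℝ))
      = ∑ d ∈ Bad, (1:ℝ) / ((d / d.minFac : ℕ) : ℝ) :=
    Finset.sum_image hinj
  have hsub : Bad.image (fun d => ((d.minFac, d / d.minFac) : ℕ × ℕ))
      ⊆ n.primeFactors ×ˢ (n.divisors.erase 1) := by
    intro x hx
    rw [Finset.mem_image] at hx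
    obtain ⟨d, hd, rfl⟩ := hx
    rw [hBad, Finset.mem_filter, Nat.mem_divisors] at hd
    obtain ⟨⟨hdvd, -⟩, hnp', hne1⟩ := hd
    show (d.minFac, d / d.minFac) ∈ _
    rw [Finset.mem_product]
    constructor
    · exact Nat.mem_primeFactors.mpr
        ⟨Nat.minFac_prime hne1, dvd_trans (Nat.minFac_dvd d) hdvd, hn0⟩
    · rw [Finset.mem_erase, Nat.mem_divisors]
      refine ⟨?_, dvd_trans (Nat.div_dvd_of_dvd (Nat.minFac_dvd d)) hdvd, hn0⟩
      intro h'
      have h2 : d / d.minFac = 1 := h'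
      have hq : d.minFac * (d / d.minFac) = d := Nat.mul_div_cancel' (Nat.minFac_dvd d)
      rw [h2, mul_one] at hq
      exact hnp' (hq ▸ Nat.minFac_prime hne1)
  have hstep3 : (∑ x ∈ Bad.image (fun d => ((d.minFac, d / d.minFac) : ℕ × ℕ)), (1:ℝ) / (x.2 : ℝ))
      ≤ ∑ x ∈ n.primeFactors ×ˢ (n.divisors.erase 1), (1:ℝ) / (x.2 : ℝ) := by
    apply Finset.sum_le_sum_of_subset_of_nonneg hsub
    intro x _ _
    positivity
  have hstep4 : (∑ x ∈ n.primeFactors ×ˢ (n.divisors.erase 1), (1:ℝ) / (x.2 : ℝ))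
      = (l:ℝ) * ∑ m ∈ n.divisors.erase 1, (1:ℝ) / m := by
    rw [Finset.sum_product]
    have hcongr : ∀ p ∈ n.primeFactors,
        (∑ m ∈ n.divisors.erase 1, (1:ℝ) / ((((p, m) : ℕ × ℕ)).2 : ℝ))
          = ∑ m ∈ n.divisors.erase 1, (1:ℝ) / m := fun p _ => rfl
    rw [Finset.sum_congr rfl hcongr, Finset.sum_const, hcard, nsmul_eq_mul]
  have hN1pos : (0:ℝ) < (N:ℝ) - 1 := by linarith
  have hS : ∑ m ∈ n.divisors.erase 1, (1:ℝ) / m ≤ (1 + 1 / ((N:ℝ) - 1)) ^ l - 1 := by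
    have h1mem : (1:ℕ) ∈ n.divisors := Nat.one_mem_divisors.mpr hn0
    have hadd := Finset.add_sum_erase n.divisors (fun m => (1:ℝ) / m) h1mem
    have htot := sum_inv_div_le n N hn0 (by omega) hNmem
    rw [hcard] at htot
    have h11 : (1:ℝ) / ((1:ℕ):ℝ) = 1 := by norm_num
    linarith [hadd, htot, h11]
  have hx1 : 1 / ((N:ℝ) - 1) ≤ 1 := by
    rw [div_le_one hN1pos]; linarith
  have hSb := bern_aux l (le_of_lt (by positivity : (0:ℝ) < 1 / ((N:ℝ) - 1))) hx1
  have hNM : (N:ℝ) - 1 = (M:ℝ) + 1 := by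
    rw [hNdef]; push_cast; ring
  have h2l : (1:ℝ) ≤ 2 ^ l := one_le_pow₀ (by norm_num)
  have hBle : ∑ d ∈ Bad, f d < ε / 2 := by
    have c1 : ∑ d ∈ Bad, f d ≤ ∑ d ∈ Bad, (1:ℝ) / ((d / d.minFac : ℕ) : ℝ) :=
      Finset.sum_le_sum hstep1
    have c2 : (l:ℝ) * ∑ m ∈ n.divisors.erase 1, (1:ℝ) / m
        ≤ (l:ℝ) * (((2:ℝ) ^ l - 1) * (1 / ((N:ℝ) - 1))) := by
      apply mul_le_mul_of_nonneg_left _ (le_of_lt hlpos)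
      calc ∑ m ∈ n.divisors.erase 1, (1:ℝ) / m ≤ (1 + 1 / ((N:ℝ) - 1)) ^ l - 1 := hS
        _ ≤ ((2:ℝ) ^ l - 1) * (1 / ((N:ℝ) - 1)) := by linarith [hSb]
    have c3 : (l:ℝ) * (((2:ℝ) ^ l - 1) * (1 / ((N:ℝ) - 1))) ≤ (l:ℝ) * 2 ^ l / ((M:ℝ) + 1) := by
      rw [hNM]
      rw [div_eq_mul_one_div ((l:ℝ) * 2 ^ l) ((M:ℝ) + 1)]
      have hpos : (0:ℝ) ≤ 1 / ((M:ℝ) + 1) := by positivity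
      nlinarith
    linarith [c1, hstep2, hstep3, hstep4, c2, c3, hbig]
  have halphaval : (∑ d ∈ n.divisors, ((d.minFac : ℝ) - 1) / d)
      = ((l:ℝ) - T) + ∑ d ∈ Bad, f d := by
    have : (∑ d ∈ n.divisors, ((d.minFac : ℝ) - 1) / d) = ∑ d ∈ n.divisors, f d := rfl
    rw [this, hsplit, hprimesum, hbeta, hnp]
  rw [halphaval, abs_lt]
  constructor <;> linarith

theorem stmt13 (l : ℕ) (hl : 1 ≤ l) :
    ∀ ε : ℝ, 0 < ε → ∃ N : ℕ, ∀ n : ℕ, 2 ≤ n → n.primeFactors.card = l →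
      N ≤ n.minFac → |alphaFn n - l| < ε ∧ |betaFn n - l| < ε := by
  simpa only [alphaFn, betaFn] using stmt13_aux l hl
end
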